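/- Let m be an even positive integer, k coprime to m, s an even integer with 0 < s \le m, and \alpha a non-cube in F_{2^m}^*. For any \delta in F_{2^m}, the F_2-linear map P on F_{2^m} defined by P(x) = x + \alpha \delta^{(2^k+1)2^s} x^{2^s} is bijective. -/

import Mathlib

theorem linear_map_P_bijective (F : Type*) [Field F] [Fintype F] (m k s : ℕ)
    (hm0 : 0 < m) (hme : Even m) (hk : 0 < k) (hcop : Nat.gcd k m = 1)
    (hse : Even s) (hs0 : 0 < s) (hsm : s ≤ m)
    (hcard : Fintype.card F = 2 ^ m)
    (α : F) (hα0 : α ≠ 0) (hαnc : ∀ w : F, α ≠ w ^ 3) (δ : F) :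
    Function.Bijective (fun x : F => x + α * δ ^ ((2 ^ k + 1) * 2 ^ s) * x ^ (2 ^ s)) := by
  -- characteristic 2
  have h2m : ((2 ^ m : ℕ) : F) = 0 := by rw [← hcard]; exact Nat.cast_card_eq_zero F
  have h2 : (2 : F) = 0 := by
    push_cast at h2m
    exact pow_eq_zero_iff hm0.ne' |>.mp h2m
  have hdvd : ringChar F ∣ 2 := ringChar.dvd (by exact_mod_cast h2)
  have hne1 : ringChar F ≠ 1 := CharP.ringChar_ne_one
  have hrc : ringChar F = 2 := by
    rcases (Nat.dvd_prime Nat.prime_two).mp hdvd with h | h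
    · exact absurd h hne1
    · exact h
  haveI hchar : CharP F 2 := hrc ▸ ringChar.charP F
  -- k is odd
  have hko : Odd k := by
    rcases Nat.even_or_odd k with hke | h
    · exfalso
      have h2 : 2 ∣ Nat.gcd k m := Nat.dvd_gcd hke.two_dvd hme.two_dvd
      omega
    · exact h
  -- 3 ∣ 2^k + 1
  have hdk : 3 ∣ 2 ^ k + 1 := by
    have : ((2 ^ k + 1 : ℕ) : ZMod 3) = 0 := by
      push_cast
      rw [show ((2 : ZMod 3)) = -1 by decide, hko.neg_one_pow]
      ring
    exact (ZMod.natCast_eq_zero_iff _ 3).mp this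
  -- 3 ∣ 2^s - 1
  have hds : 3 ∣ 2 ^ s - 1 := by
    obtain ⟨r, hr⟩ := hse
    have := Nat.sub_dvd_pow_sub_pow 4 1 r
    have h4 : (4 : ℕ) ^ r = 2 ^ s := by
      rw [hr, show (4 : ℕ) = 2 ^ 2 by norm_num, ← pow_mul]
      ring_nf
    simpa [h4] using this
  obtain ⟨u, hu⟩ := hdk
  obtain ⟨t, ht⟩ := hds
  -- the key: trivial kernel
  have key : ∀ z : F, z + α * δ ^ ((2 ^ k + 1) * 2 ^ s) * z ^ 2 ^ s = 0 → z = 0 := by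
    intro z hz
    by_contra hz0
    rcases eq_or_ne δ 0 with hδ | hδ
    · rw [hδ, zero_pow (by positivity)] at hz
      simp at hz
      exact hz0 hz
    · have hzq : α * δ ^ ((2 ^ k + 1) * 2 ^ s) * z ^ 2 ^ s = z := by
        have h1 : α * δ ^ ((2 ^ k + 1) * 2 ^ s) * z ^ 2 ^ s = -z := by
          linear_combination hz
        rw [h1, CharTwo.neg_eq]
      have hq1 : z ^ (2 ^ s) = z ^ (2 ^ s - 1) * z := by
        rw [← pow_succ]
        congr 1
        have : 0 < 2 ^ s := Nat.pow_pos (n := s) (by norm_num : 0 < 2) |>.trans_le le_rfl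
        omega
      rw [hq1, ← mul_assoc] at hzq
      have h1 : α * δ ^ ((2 ^ k + 1) * 2 ^ s) * z ^ (2 ^ s - 1) = 1 := by
        have := mul_right_cancel₀ hz0 (hzq.trans (one_mul z).symm)
        exact this
      -- rewrite as α * b ^ 3 = 1
      set b : F := δ ^ (u * 2 ^ s) * z ^ t with hb
      have hb3 : α * b ^ 3 = 1 := by
        rw [hb, mul_pow, ← pow_mul, ← pow_mul, ← h1, ht, hu]
        ring_nf
      have hbne : b ≠ 0 := by
        intro h
        rw [h] at hb3
        simp at hb3
      have : α = (b⁻¹) ^ 3 := by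
        rw [inv_pow]
        field_simp
        linear_combination hb3
      exact hαnc _ this
  constructor
  · intro x y hxy
    simp only at hxy
    have hz : (x - y) + α * δ ^ ((2 ^ k + 1) * 2 ^ s) * (x - y) ^ 2 ^ s = 0 := by
      rw [sub_pow_char_pow x y s]
      linear_combination hxy
    have := key _ hz
    exact sub_eq_zero.mp this
  · exact Finite.surjective_of_injective (by
      intro x y hxy
      simp only at hxy
      have hz : (x - y) + α * δ ^ ((2 ^ k + 1) * 2 ^ s) * (x - y) ^ 2 ^ s = 0 := by
        rw [sub_pow_char_pow x y s]
        linear_combination hxy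
      exact sub_eq_zero.mp (key _ hz))
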